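/- Let K be a field and f0 = s u^2, f1 = t^2(s+u), f2 = s t(s+u), f3 = t u(s+u) in K[s,t,u], with ideal I = (f0,f1,f2,f3). Then the saturation of I with respect to (s,t,u) contains the polynomials t(s+u) and s u^2; in particular the initial degree of the saturated ideal is at most 2. -/

import Mathlib

open MvPolynomial

/-- For `f0 = s u^2`, `f1 = t^2(s+u)`, `f2 = s t(s+u)`, `f3 = t u(s+u)` in
`K[s,t,u]` with `I = (f0,f1,f2,f3)`, the saturation of `I` with respect to the irrelevant
ideal `m = (s,t,u)` contains `t(s+u)` and `s u^2`: there is a `k` with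
`m^k · (t(s+u), s u^2) ⊆ I`.  In particular the initial degree of `I^sat` is at most 2. -/
theorem stmt_11 (K : Type*) [Field K]
    (f0 f1 f2 f3 : MvPolynomial (Fin 3) K)
    (hf0 : f0 = X 0 * X 2 ^ 2) (hf1 : f1 = X 1 ^ 2 * (X 0 + X 2))
    (hf2 : f2 = X 0 * X 1 * (X 0 + X 2)) (hf3 : f3 = X 1 * X 2 * (X 0 + X 2))
    (I : Ideal (MvPolynomial (Fin 3) K)) (hI : I = Ideal.span {f0, f1, f2, f3}) :
    ∃ k : ℕ, (Ideal.span {X 0, X 1, X 2} : Ideal (MvPolynomial (Fin 3) K)) ^ k *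
      Ideal.span {X 1 * (X 0 + X 2), X 0 * X 2 ^ 2} ≤ I := by
  subst hf0 hf1 hf2 hf3 hI
  refine ⟨1, ?_⟩
  rw [pow_one, Ideal.span_mul_span, Ideal.span_le]
  intro p hp
  rw [Set.mem_mul] at hp
  obtain ⟨x, hx, y, hy, rfl⟩ := hp
  simp only [Set.mem_insert_iff, Set.mem_singleton_iff] at hx hy
  have hmem : ∀ g ∈ ({X 0 * X 2 ^ 2, X 1 ^ 2 * (X 0 + X 2), X 0 * X 1 * (X 0 + X 2),
      X 1 * X 2 * (X 0 + X 2)} : Set (MvPolynomial (Fin 3) K)),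
      g ∈ Ideal.span ({X 0 * X 2 ^ 2, X 1 ^ 2 * (X 0 + X 2), X 0 * X 1 * (X 0 + X 2),
      X 1 * X 2 * (X 0 + X 2)} : Set (MvPolynomial (Fin 3) K)) := fun g hg => Ideal.subset_span hg
  rcases hx with rfl | rfl | rfl <;> rcases hy with rfl | rfl
  · have h : (X 0 * (X 1 * (X 0 + X 2)) : MvPolynomial (Fin 3) K) = X 0 * X 1 * (X 0 + X 2) := by ring
    rw [h]; exact hmem _ (by simp)
  · exact Ideal.mul_mem_left _ _ (hmem (X 0 * X 2 ^ 2) (by simp))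
  · have h : (X 1 * (X 1 * (X 0 + X 2)) : MvPolynomial (Fin 3) K) = X 1 ^ 2 * (X 0 + X 2) := by ring
    rw [h]; exact hmem _ (by simp)
  · exact Ideal.mul_mem_left _ _ (hmem (X 0 * X 2 ^ 2) (by simp))
  · have h : (X 2 * (X 1 * (X 0 + X 2)) : MvPolynomial (Fin 3) K) = X 1 * X 2 * (X 0 + X 2) := by ring
    rw [h]; exact hmem _ (by simp)
  · exact Ideal.mul_mem_left _ _ (hmem (X 0 * X 2 ^ 2) (by simp))
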